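/- Let p : ℝ^d → [1, ∞) be measurable with p⁺ := ess sup_{x∈ℝ^d} p(x) < ∞. If u ∈ L^{p(·)}(ℝ^d), then for 𝓛^d-a.e. x ∈ ℝ^d, lim_{ε→0} ε^{−d} ∫_{B_ε(x)} |u(y) − u(x)|^{p(y)} dy = 0. -/

import Mathlib

open MeasureTheory Filter Topology Metric Set
open scoped ENNReal NNReal RealInnerProductSpace

noncomputable section

/-- Euclidean space ℝ^d. -/
abbrev Euc (d : ℕ) : Type := EuclideanSpace ℝ (Fin d)

/-- The modular `ϱ_{p(·)}(u) = ∫_Ω ‖u‖^{p(x)} dx` of a variable exponent. -/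
def eucModular {d : ℕ} {V : Type} [NormedAddCommGroup V]
    (Ω : Set (Euc d)) (p : Euc d → ℝ) (u : Euc d → V) : ℝ :=
  ∫ x in Ω, ‖u x‖ ^ p x

/-- The Luxemburg norm of `u` in `L^{p(·)}(Ω)`. -/
def luxNorm {d : ℕ} {V : Type} [NormedAddCommGroup V]
    (Ω : Set (Euc d)) (p : Euc d → ℝ) (u : Euc d → V) : ℝ :=
  sInf {l : ℝ | 0 < l ∧ (∫ x in Ω, (‖u x‖ / l) ^ p x) ≤ 1}

/-- Membership in the variable exponent Lebesgue space `L^{p(·)}(Ω)`. -/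
def MemVarLp {d : ℕ} {V : Type} [NormedAddCommGroup V]
    (Ω : Set (Euc d)) (p : Euc d → ℝ) (u : Euc d → V) : Prop :=
  AEStronglyMeasurable u (volume.restrict Ω) ∧
    ∃ l : ℝ, 0 < l ∧ IntegrableOn (fun x => (‖u x‖ / l) ^ p x) Ω

/-- log-Hölder continuity of a variable exponent on `Ω`. -/
def LogHolder {d : ℕ} (Ω : Set (Euc d)) (p : Euc d → ℝ) : Prop :=
  ∃ C : ℝ, 0 < C ∧ ∀ x ∈ Ω, ∀ y ∈ Ω, dist x y ≤ 1 / 2 →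
    |p x - p y| ≤ C / (-Real.log (dist x y))

/-- The elementary jump function `u_{x₀,a,b,ν}`. -/
def jumpFun {d m : ℕ} (x₀ : Euc d) (a b : Euc m) (ν : Euc d) : Euc d → Euc m :=
  fun x => if 0 < ⟪x - x₀, ν⟫ then a else b

/-- `x` is an approximate jump point of `u` with one-sided limits `a, b` and normal `ν`. -/
def ApproxJumpPt {d m : ℕ} (u : Euc d → Euc m) (x : Euc d) (a b : Euc m) (ν : Euc d) : Prop :=
  a ≠ b ∧ ‖ν‖ = 1 ∧ ∀ ϱ : ℝ, 0 < ϱ →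
    Tendsto (fun ε : ℝ =>
        (volume {y ∈ ball x ε | ϱ ≤ ‖u y - jumpFun x a b ν y‖}).toReal / ε ^ d)
      (𝓝[>] 0) (𝓝 0)

/-- The (approximate) jump set `J_u`. -/
def approxJumpSet {d m : ℕ} (u : Euc d → Euc m) : Set (Euc d) :=
  {x | ∃ a b ν, ApproxJumpPt u x a b ν}

open Classical in
/-- The one-sided trace `u⁺` on the jump set (junk value `0` elsewhere). -/
def jumpA {d m : ℕ} (u : Euc d → Euc m) (x : Euc d) : Euc m :=
  if h : x ∈ approxJumpSet u then h.choose else 0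

open Classical in
/-- The one-sided trace `u⁻` on the jump set (junk value `0` elsewhere). -/
def jumpB {d m : ℕ} (u : Euc d → Euc m) (x : Euc d) : Euc m :=
  if h : x ∈ approxJumpSet u then h.choose_spec.choose else 0

open Classical in
/-- The approximate normal `ν_u` on the jump set (junk value `0` elsewhere). -/
def jumpNu {d m : ℕ} (u : Euc d → Euc m) (x : Euc d) : Euc d :=
  if h : x ∈ approxJumpSet u then h.choose_spec.choose_spec.choose else 0

/-- `G` is the approximate gradient of `u` at `x`. -/
def ApproxGradAt {d m : ℕ} (u : Euc d → Euc m) (x : Euc d) (G : Euc d →L[ℝ] Euc m) : Prop :=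
  ∀ ϱ : ℝ, 0 < ϱ →
    Tendsto (fun ε : ℝ =>
        (volume {y ∈ ball x ε | ϱ * ‖y - x‖ ≤ ‖u y - u x - G (y - x)‖}).toReal / ε ^ d)
      (𝓝[>] 0) (𝓝 0)

open Classical in
/-- The approximate gradient `∇u` (junk value `0` where it does not exist). -/
def aGrad {d m : ℕ} (u : Euc d → Euc m) (x : Euc d) : Euc d →L[ℝ] Euc m :=
  if h : ∃ G, ApproxGradAt u x G then h.choose else 0

/-- Membership in `GSBV^{p(·)}(A;ℝ^m)`: measurable, approximately differentiable a.e.,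
gradient with finite `p(·)`-modular and jump set with finite `ℋ^{d-1}` measure. -/
def MemGSBVp {d m : ℕ} (A : Set (Euc d)) (p : Euc d → ℝ) (u : Euc d → Euc m) : Prop :=
  AEStronglyMeasurable u (volume.restrict A) ∧
  (∀ᵐ x ∂volume.restrict A, ∃ G, ApproxGradAt u x G) ∧
  IntegrableOn (fun x => ‖aGrad u x‖ ^ p x) A ∧
  μH[(d : ℝ) - 1] (approxJumpSet u ∩ A) < ⊤

/-- Membership in `SBV^{p(·)}(A;ℝ^m)`. -/
def MemSBVp {d m : ℕ} (A : Set (Euc d)) (p : Euc d → ℝ) (u : Euc d → Euc m) : Prop :=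
  MemGSBVp A p u ∧ IntegrableOn u A ∧
    (∫⁻ x in approxJumpSet u ∩ A, ‖jumpA u x - jumpB u x‖₊ ∂μH[(d : ℝ) - 1]) < ⊤

/-- Piecewise constant SBV functions: vanishing approximate gradient, finite jump measure. -/
def MemSBVpc {d m : ℕ} (A : Set (Euc d)) (u : Euc d → Euc m) : Prop :=
  AEStronglyMeasurable u (volume.restrict A) ∧
  (∀ᵐ x ∂volume.restrict A, ApproxGradAt u x 0) ∧
  μH[(d : ℝ) - 1] (approxJumpSet u ∩ A) < ⊤

/-- Membership in the variable exponent Sobolev space `W^{1,p(·)}`. -/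
def MemW1p {d m : ℕ} (A : Set (Euc d)) (p : Euc d → ℝ) (u : Euc d → Euc m) : Prop :=
  MemGSBVp A p u ∧ μH[(d : ℝ) - 1] (approxJumpSet u ∩ A) = 0 ∧ MemVarLp A p u

/-- The quantile `u_*(s;B)` of a scalar function. -/
def quantile1 {d : ℕ} (v : Euc d → ℝ) (B : Set (Euc d)) (s : ℝ) : ℝ :=
  sInf {t : ℝ | ENNReal.ofReal s ≤ volume {x ∈ B | v x < t}}

/-- The componentwise quantile `u_*(s;B)`. -/
def quantile {d m : ℕ} (u : Euc d → Euc m) (B : Set (Euc d)) (s : ℝ) : Euc m :=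
  WithLp.toLp 2 (fun i => quantile1 (fun x => u x i) B s)

/-- The (componentwise) median `med(u;B)`. -/
def medOn {d m : ℕ} (u : Euc d → Euc m) (B : Set (Euc d)) : Euc m :=
  quantile u B ((volume B).toReal / 2)

/-- The quantity `(2 γ_iso ℋ^{d−1}(J_u ∩ B))^{d/(d−1)}`. -/
def jumpQ {d m : ℕ} (γ : ℝ) (u : Euc d → Euc m) (B : Set (Euc d)) : ℝ :=
  (2 * γ * (μH[(d : ℝ) - 1] (approxJumpSet u ∩ B)).toReal) ^ ((d : ℝ) / ((d : ℝ) - 1))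

/-- The lower truncation level `τ'(u;B)`. -/
def tauLow {d m : ℕ} (γ : ℝ) (u : Euc d → Euc m) (B : Set (Euc d)) : Euc m :=
  quantile u B (jumpQ γ u B)

/-- The upper truncation level `τ''(u;B)`. -/
def tauHigh {d m : ℕ} (γ : ℝ) (u : Euc d → Euc m) (B : Set (Euc d)) : Euc m :=
  quantile u B ((volume B).toReal - jumpQ γ u B)

/-- The truncation operator `T_B u = (u ∧ τ''(u;B)) ∨ τ'(u;B)`. -/
def truncOn {d m : ℕ} (γ : ℝ) (u : Euc d → Euc m) (B : Set (Euc d)) : Euc d → Euc m :=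
  fun x => WithLp.toLp 2 (fun i => max (min (u x i) (tauHigh γ u B i)) (tauLow γ u B i))

/-- Minimization with own boundary data:
`m_F(u,A) = inf {F(v,A) : v admissible, v = u in a neighborhood of ∂A}`. -/
def mF {d m : ℕ} (F : (Euc d → Euc m) → Set (Euc d) → ℝ≥0∞)
    (S : (Euc d → Euc m) → Prop) (u : Euc d → Euc m) (A : Set (Euc d)) : ℝ≥0∞ :=
  ⨅ (v : Euc d → Euc m) (_ : S v)
    (_ : ∃ U : Set (Euc d), IsOpen U ∧ frontier A ⊆ U ∧ EqOn v u U), F v A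

/-- Volume of the unit ball `γ_k` in ℝ^k. -/
def unitBallVol (k : ℕ) : ℝ := (volume (ball (0 : Euc k) 1)).toReal

/-- The affine function `ℓ_{x₀,u₀,ξ}`. -/
def affineFun {d m : ℕ} (x₀ : Euc d) (u₀ : Euc m) (ξ : Euc d →L[ℝ] Euc m) : Euc d → Euc m :=
  fun x => u₀ + ξ (x - x₀)

/-- The bulk density cell formula `limsup_ε m_F(ℓ_{x₀,u₀,ξ}, B_ε(x₀)) / (γ_d ε^d)`. -/
def bulkDensity {d m : ℕ} (F : (Euc d → Euc m) → Set (Euc d) → ℝ≥0∞)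
    (S : (Euc d → Euc m) → Prop) (x₀ : Euc d) (u₀ : Euc m) (ξ : Euc d →L[ℝ] Euc m) : ℝ≥0∞ :=
  Filter.limsup (fun ε : ℝ =>
      mF F S (affineFun x₀ u₀ ξ) (ball x₀ ε) / ENNReal.ofReal (unitBallVol d * ε ^ d))
    (𝓝[>] 0)

/-- The bulk density cell formula with the linear competitor `ℓ_{0,0,ξ}(x) = ξ x`. -/
def bulkDensity0 {d m : ℕ} (F : (Euc d → Euc m) → Set (Euc d) → ℝ≥0∞)
    (S : (Euc d → Euc m) → Prop) (x₀ : Euc d) (ξ : Euc d →L[ℝ] Euc m) : ℝ≥0∞ :=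
  Filter.limsup (fun ε : ℝ =>
      mF F S (fun x => ξ x) (ball x₀ ε) / ENNReal.ofReal (unitBallVol d * ε ^ d))
    (𝓝[>] 0)

/-- The surface density cell formula
`limsup_ε m_F(u_{x₀,a,b,ν}, B_ε(x₀)) / (γ_{d−1} ε^{d−1})`. -/
def surfDensity {d m : ℕ} (F : (Euc d → Euc m) → Set (Euc d) → ℝ≥0∞)
    (S : (Euc d → Euc m) → Prop) (x₀ : Euc d) (a b : Euc m) (ν : Euc d) : ℝ≥0∞ :=
  Filter.limsup (fun ε : ℝ =>
      mF F S (jumpFun x₀ a b ν) (ball x₀ ε) /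
        ENNReal.ofReal (unitBallVol (d - 1) * ε ^ (d - 1)))
    (𝓝[>] 0)

/-- `∫_B |∇u|^{p(x)} dx` as an extended-real quantity. -/
def eBulk {d m : ℕ} (p : Euc d → ℝ) (u : Euc d → Euc m) (A : Set (Euc d)) : ℝ≥0∞ :=
  ∫⁻ x in A, ENNReal.ofReal (‖aGrad u x‖ ^ p x)

/-- `ℋ^{d−1}(J_u ∩ A)`. -/
def eSurf {d m : ℕ} (u : Euc d → Euc m) (A : Set (Euc d)) : ℝ≥0∞ :=
  μH[(d : ℝ) - 1] (approxJumpSet u ∩ A)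

/-- The bulk part `∫_A f(x, ∇u) dx` of a free-discontinuity energy. -/
def energyBulkInt {d m : ℕ} (f : Euc d → (Euc d →L[ℝ] Euc m) → ℝ)
    (u : Euc d → Euc m) (A : Set (Euc d)) : ℝ≥0∞ :=
  ∫⁻ x in A, ENNReal.ofReal (f x (aGrad u x))

/-- The surface part `∫_{J_u ∩ A} g(x, [u], ν_u) dℋ^{d−1}` of a free-discontinuity energy. -/
def energySurfInt {d m : ℕ} (g : Euc d → Euc m → Euc d → ℝ)
    (u : Euc d → Euc m) (A : Set (Euc d)) : ℝ≥0∞ :=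
  ∫⁻ x in approxJumpSet u ∩ A,
    ENNReal.ofReal (g x (jumpA u x - jumpB u x) (jumpNu u x)) ∂μH[(d : ℝ) - 1]

/-- The measure `μ = 𝓛^d⌊Ω + ℋ^{d−1}⌊(J_u ∩ Ω)`. -/
def muGSBV {d m : ℕ} (Ω : Set (Euc d)) (u : Euc d → Euc m) : Measure (Euc d) :=
  volume.restrict Ω + (μH[(d : ℝ) - 1]).restrict (approxJumpSet u ∩ Ω)

/-- `m^δ_F(u,A)`: infimum of `Σᵢ m_F(u,Bᵢ)` over countable families of pairwise disjoint
balls of diameter at most `δ` contained in `A` covering `μ`-almost all of `A`. -/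
def mDelta {d m : ℕ} (F : (Euc d → Euc m) → Set (Euc d) → ℝ≥0∞)
    (S : (Euc d → Euc m) → Prop) (u : Euc d → Euc m) (A : Set (Euc d))
    (μ : Measure (Euc d)) (δ : ℝ) : ℝ≥0∞ :=
  ⨅ (I : Set (Euc d × ℝ)) (_ : I.Countable)
    (_ : ∀ b ∈ I, ball b.1 b.2 ⊆ A ∧ 2 * b.2 ≤ δ)
    (_ : I.PairwiseDisjoint fun b => ball b.1 b.2)
    (_ : μ (A \ ⋃ b ∈ I, ball b.1 b.2) = 0),
    ∑' b : I, mF F S u (ball (b : Euc d × ℝ).1 (b : Euc d × ℝ).2)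

/-- Convergence in measure on every bounded ball (the topology of `L⁰(ℝ^d;ℝ^m)`). -/
def TendstoLocInMeasure {d m : ℕ} (uj : ℕ → Euc d → Euc m) (u : Euc d → Euc m) : Prop :=
  ∀ R : ℝ, 0 < R → TendstoInMeasure (volume.restrict (ball (0 : Euc d) R)) uj atTop u

/-- `F` is the Γ-limit of `Fj` with respect to convergence in measure `μ`. -/
def IsGammaLimit {d m : ℕ} (μ : Measure (Euc d))
    (Fj : ℕ → (Euc d → Euc m) → ℝ≥0∞) (F : (Euc d → Euc m) → ℝ≥0∞) : Prop :=
  (∀ (u : Euc d → Euc m) (uj : ℕ → Euc d → Euc m),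
      TendstoInMeasure μ uj atTop u → F u ≤ atTop.liminf fun j => Fj j (uj j)) ∧
  (∀ u : Euc d → Euc m, ∃ uj : ℕ → Euc d → Euc m,
      TendstoInMeasure μ uj atTop u ∧ atTop.limsup (fun j => Fj j (uj j)) ≤ F u)

/-- `F` is the Γ-limit of `Fj` with respect to local convergence in measure on `ℝ^d`. -/
def IsGammaLimitL0 {d m : ℕ}
    (Fj : ℕ → (Euc d → Euc m) → ℝ≥0∞) (F : (Euc d → Euc m) → ℝ≥0∞) : Prop :=
  (∀ (u : Euc d → Euc m) (uj : ℕ → Euc d → Euc m),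
      TendstoLocInMeasure uj u → F u ≤ atTop.liminf fun j => Fj j (uj j)) ∧
  (∀ u : Euc d → Euc m, ∃ uj : ℕ → Euc d → Euc m,
      TendstoLocInMeasure uj u ∧ atTop.limsup (fun j => Fj j (uj j)) ≤ F u)

/-- `F` is the Γ-limit of `Fj` with respect to `L¹(Ω)` convergence. -/
def IsGammaLimitL1 {d m : ℕ} (Ω : Set (Euc d))
    (Fj : ℕ → (Euc d → Euc m) → ℝ≥0∞) (F : (Euc d → Euc m) → ℝ≥0∞) : Prop :=
  (∀ (u : Euc d → Euc m) (uj : ℕ → Euc d → Euc m),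
      Tendsto (fun j => ∫ x in Ω, ‖uj j x - u x‖) atTop (𝓝 0) →
      F u ≤ atTop.liminf fun j => Fj j (uj j)) ∧
  (∀ u : Euc d → Euc m, ∃ uj : ℕ → Euc d → Euc m,
      Tendsto (fun j => ∫ x in Ω, ‖uj j x - u x‖) atTop (𝓝 0) ∧
      atTop.limsup (fun j => Fj j (uj j)) ≤ F u)

/-- `Ω` has Lipschitz boundary: near every boundary point it is the subgraph of a
Lipschitz function in some unit direction. -/
def HasLipschitzBoundary {d : ℕ} (Ω : Set (Euc d)) : Prop :=
  ∀ x ∈ frontier Ω, ∃ (L : ℝ≥0) (ν : Euc d) (φ : Euc d → ℝ) (r : ℝ),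
    0 < r ∧ ‖ν‖ = 1 ∧ LipschitzWith L φ ∧
    Ω ∩ ball x r = {y ∈ ball x r | ⟪y, ν⟫ < φ (y - ⟪y, ν⟫ • ν)}


lemma vlp_rpow_add_le {s t q P : ℝ} (hs : 0 ≤ s) (ht : 0 ≤ t) (hq0 : 0 ≤ q) (hqP : q ≤ P) :
    (s + t) ^ q ≤ 2 ^ P * (s ^ q + t ^ q) := by
  have hmax : 0 ≤ max s t := le_trans hs (le_max_left s t)
  have h1 : s + t ≤ 2 * max s t := by
    rcases le_total s t with h | h
    · rw [max_eq_right h]; linarith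
    · rw [max_eq_left h]; linarith
  have h2 : (s + t) ^ q ≤ (2 * max s t) ^ q :=
    Real.rpow_le_rpow (by linarith) h1 hq0
  have h3 : (2 * max s t) ^ q = 2 ^ q * (max s t) ^ q :=
    Real.mul_rpow zero_le_two hmax
  have h4 : (max s t) ^ q ≤ s ^ q + t ^ q := by
    rcases le_total s t with h | h
    · rw [max_eq_right h]
      have := Real.rpow_nonneg hs q; linarith
    · rw [max_eq_left h]
      have := Real.rpow_nonneg ht q; linarith
  have h5 : (2 : ℝ) ^ q ≤ 2 ^ P := Real.rpow_le_rpow_of_exponent_le one_le_two hqP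
  have hP2 : (0 : ℝ) ≤ 2 ^ P := Real.rpow_nonneg zero_le_two P
  calc (s + t) ^ q ≤ 2 ^ q * (max s t) ^ q := by rw [← h3]; exact h2
    _ ≤ 2 ^ P * (s ^ q + t ^ q) :=
        mul_le_mul h5 h4 (Real.rpow_nonneg hmax q) hP2

lemma vlp_rpow_le_of_le {t δ q : ℝ} (ht : 0 ≤ t) (htδ : t ≤ δ) (hδ : δ ≤ 1) (hq : 1 ≤ q) :
    t ^ q ≤ δ := by
  rcases eq_or_lt_of_le ht with h | h
  · rw [← h, Real.zero_rpow (by linarith)]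
    linarith
  · calc t ^ q ≤ t ^ (1 : ℝ) :=
        Real.rpow_le_rpow_of_exponent_ge h (by linarith) hq
      _ = t := Real.rpow_one t
      _ ≤ δ := htδ

lemma vlp_rpow_le_max {a q P : ℝ} (ha : 0 ≤ a) (hq : 0 ≤ q) (hqP : q ≤ P) :
    a ^ q ≤ max 1 a ^ P :=
  le_trans (Real.rpow_le_rpow ha (le_max_right 1 a) hq)
    (Real.rpow_le_rpow_of_exponent_le (le_max_left 1 a) hqP)

lemma vlp_locInt {d : ℕ} {p : Euc d → ℝ} (hp : Measurable p)
    {pl : ℝ} (h1 : ∀ᵐ x : Euc d, 1 ≤ p x) (hpl : ∀ᵐ x : Euc d, p x ≤ pl)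
    {u : Euc d → ℝ} (hu : AEStronglyMeasurable u (volume : Measure (Euc d)))
    {l : ℝ} (hl : 0 < l)
    (hint : Integrable (fun x => (|u x| / l) ^ p x) (volume : Measure (Euc d)))
    (c : ℝ) : LocallyIntegrable (fun y => |u y - c| ^ p y) (volume : Measure (Euc d)) := by
  rw [locallyIntegrable_iff]
  intro K hK
  have hmeas : AEStronglyMeasurable (fun y => |u y - c| ^ p y) (volume.restrict K) := by
    have h := (((hu.sub (aestronglyMeasurable_const (b := c))).norm).aemeasurable.pow
      hp.aemeasurable).aestronglyMeasurable
    simp only [Real.norm_eq_abs] at h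
    exact h.restrict
  refine Integrable.mono'
    (g := fun y => (2 ^ pl * max 1 l ^ pl) * ((|u y| / l) ^ p y) + 2 ^ pl * max 1 |c| ^ pl)
    ?_ hmeas ?_
  · exact (hint.integrableOn.const_mul _).add
      (integrableOn_const hK.measure_lt_top.ne)
  · filter_upwards [ae_restrict_of_ae (h1.and hpl)] with y hy
    obtain ⟨hy1, hy2⟩ := hy
    have h0 : (0 : ℝ) ≤ p y := le_trans zero_le_one hy1
    rw [Real.norm_eq_abs, abs_of_nonneg (Real.rpow_nonneg (abs_nonneg _) _)]
    have habs : |u y - c| ≤ |u y| + |c| := abs_sub _ _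
    have key1 : |u y| ^ p y ≤ max 1 l ^ pl * (|u y| / l) ^ p y := by
      have e0 : |u y| = |u y| / l * l := (div_mul_cancel₀ _ (ne_of_gt hl)).symm
      calc |u y| ^ p y = (|u y| / l * l) ^ p y := by rw [← e0]
        _ = (|u y| / l) ^ p y * l ^ p y :=
            Real.mul_rpow (div_nonneg (abs_nonneg _) hl.le) hl.le
        _ ≤ (|u y| / l) ^ p y * max 1 l ^ pl := by
            exact mul_le_mul_of_nonneg_left (vlp_rpow_le_max hl.le h0 hy2)
              (Real.rpow_nonneg (div_nonneg (abs_nonneg _) hl.le) _)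
        _ = max 1 l ^ pl * (|u y| / l) ^ p y := mul_comm _ _
    have key2 : |c| ^ p y ≤ max 1 |c| ^ pl := vlp_rpow_le_max (abs_nonneg _) h0 hy2
    have h2pl : (0 : ℝ) ≤ 2 ^ pl := Real.rpow_nonneg zero_le_two pl
    calc |u y - c| ^ p y ≤ (|u y| + |c|) ^ p y :=
          Real.rpow_le_rpow (abs_nonneg _) habs h0
      _ ≤ 2 ^ pl * (|u y| ^ p y + |c| ^ p y) :=
          vlp_rpow_add_le (abs_nonneg _) (abs_nonneg _) h0 hy2
      _ ≤ 2 ^ pl * max 1 l ^ pl * (|u y| / l) ^ p y + 2 ^ pl * max 1 |c| ^ pl := by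
          nlinarith
 
/-- Lebesgue points in variable exponent spaces: if
`p⁺ = ess sup p < ∞` and `u ∈ L^{p(·)}(ℝ^d)`, then for a.e. `x`,
`ε^{−d} ∫_{B_ε(x)} |u(y) − u(x)|^{p(y)} dy → 0` as `ε → 0`. -/
theorem varLp_lebesgue_points {d : ℕ} (p : Euc d → ℝ) (hp : Measurable p)
    (h1 : ∀ᵐ x : Euc d, 1 ≤ p x) (pl : ℝ) (hpl : ∀ᵐ x : Euc d, p x ≤ pl)
    (u : Euc d → ℝ) (hu : MemVarLp Set.univ p u) :
    ∀ᵐ x : Euc d, Tendsto (fun ε : ℝ =>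
        ε ^ (-(d : ℝ)) * ∫ y in ball x ε, |u y - u x| ^ p y) (𝓝[>] 0) (𝓝 0) := by
  obtain ⟨hmeas, l, hl, hint⟩ := hu
  rw [Measure.restrict_univ] at hmeas
  rw [integrableOn_univ] at hint
  simp only [Real.norm_eq_abs] at hint
  have hloc : ∀ c : ℝ, LocallyIntegrable (fun y => |u y - c| ^ p y) volume :=
    fun c => vlp_locInt hp h1 hpl hmeas hl hint c
  set κ : ℝ := (volume (closedBall (0 : Euc d) 1)).toReal with hκdef
  have hκfin : volume (closedBall (0 : Euc d) 1) ≠ ⊤ := measure_closedBall_lt_top.ne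
  have hκpos : 0 < κ :=
    ENNReal.toReal_pos (measure_closedBall_pos _ _ one_pos).ne' hκfin
  have hvol : ∀ (x : Euc d) {ε : ℝ}, 0 ≤ ε →
      (volume (closedBall x ε)).toReal = ε ^ d * κ := by
    intro x ε hε
    rw [Measure.addHaar_closedBall' volume x hε, ENNReal.toReal_mul,
      ENNReal.toReal_ofReal (pow_nonneg hε _), finrank_euclideanSpace_fin]
  have key : ∀ᵐ x : Euc d, ∀ c : ℚ, Tendsto (fun ε : ℝ =>
      ⨍ y in closedBall x ε, ‖|u y - (c : ℝ)| ^ p y - |u x - (c : ℝ)| ^ p x‖)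
      (𝓝[>] 0) (𝓝 0) := by
    rw [ae_all_iff]
    intro c
    filter_upwards [IsUnifLocDoublingMeasure.ae_tendsto_average_norm_sub volume
      (hloc (c : ℝ)) 1] with x hx
    have h2' : ∀ᶠ ε : ℝ in 𝓝[>] 0, x ∈ closedBall ((fun _ : ℝ => x) ε) (1 * ε) := by
      filter_upwards [self_mem_nhdsWithin] with ε hε
      rw [one_mul]
      exact mem_closedBall_self (le_of_lt hε)
    exact hx (fun _ => x) (fun ε => ε) tendsto_id h2'
  filter_upwards [key, h1, hpl] with x hkey hx1 hxpl
  rw [Metric.tendsto_nhds]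
  intro η hη
  set B : ℝ := 2 ^ pl * κ with hBdef
  have hB : 0 < B := mul_pos (Real.rpow_pos_of_pos two_pos pl) hκpos
  set δ : ℝ := min 1 (η / (3 * B + 1)) with hδdef
  have hδpos : 0 < δ := lt_min one_pos (div_pos hη (by linarith))
  have hδ1 : δ ≤ 1 := min_le_left _ _
  have hδη : 3 * B * δ < η := by
    have h2 : δ ≤ η / (3 * B + 1) := min_le_right _ _
    have h3 : (0 : ℝ) < 3 * B + 1 := by linarith
    rw [le_div_iff₀ h3] at h2
    nlinarith
  obtain ⟨c, hc⟩ := exists_rat_near (u x) hδpos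
  have hgx : |u x - (c : ℝ)| ^ p x ≤ δ := vlp_rpow_le_of_le (abs_nonneg _) hc.le hδ1 hx1
  have hTδ := Metric.tendsto_nhds.1 (hkey c) δ hδpos
  filter_upwards [hTδ, self_mem_nhdsWithin] with ε hTε hε
  replace hε : 0 < ε := hε
  set S : Set (Euc d) := closedBall x ε with hSdef
  set gx : ℝ := |u x - (c : ℝ)| ^ p x with hgxdef
  set T : ℝ := ⨍ y in S, ‖|u y - (c : ℝ)| ^ p y - gx‖ with hTdef
  have hT : T < δ := by
    have := hTε
    rw [Real.dist_eq, sub_zero] at this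
    exact lt_of_le_of_lt (le_abs_self _) this
  have hg_int : IntegrableOn (fun y => |u y - (c : ℝ)| ^ p y) S volume :=
    (hloc (c : ℝ)).integrableOn_isCompact (isCompact_closedBall x ε)
  have hvolS_fin : volume S < ⊤ := measure_closedBall_lt_top
  have hvolS : (volume S).toReal = ε ^ d * κ := hvol x hε.le
  have hvolS_pos : 0 < (volume S).toReal :=
    ENNReal.toReal_pos (measure_closedBall_pos volume x hε).ne' hvolS_fin.ne
  have hconst_int : ∀ a : ℝ, IntegrableOn (fun _ : Euc d => a) S volume :=
    fun a => integrableOn_const hvolS_fin.ne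
  have hdiff_int : IntegrableOn (fun y => ‖|u y - (c : ℝ)| ^ p y - gx‖) S volume :=
    (hg_int.sub (hconst_int gx)).norm
  have hae : ∀ᵐ y ∂volume.restrict S, 1 ≤ p y ∧ p y ≤ pl :=
    ae_restrict_of_ae (h1.and hpl)
  have hGmeas : AEStronglyMeasurable (fun y => |u y - u x| ^ p y) (volume.restrict S) := by
    have h := (((hmeas.sub (aestronglyMeasurable_const (b := u x))).norm).aemeasurable.pow
      hp.aemeasurable).aestronglyMeasurable
    simp only [Real.norm_eq_abs] at h
    exact h.restrict
  have hGbound : ∀ᵐ y ∂volume.restrict S,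
      ‖|u y - u x| ^ p y‖ ≤ 2 ^ pl * (|u y - (c : ℝ)| ^ p y + δ) := by
    filter_upwards [hae] with y hy
    obtain ⟨hy1, hy2⟩ := hy
    have h0 : (0 : ℝ) ≤ p y := le_trans zero_le_one hy1
    rw [Real.norm_eq_abs, abs_of_nonneg (Real.rpow_nonneg (abs_nonneg _) _)]
    have habs : |u y - u x| ≤ |u y - (c : ℝ)| + |u x - (c : ℝ)| := by
      have := abs_sub_le (u y) (c : ℝ) (u x)
      have := abs_sub_comm (c : ℝ) (u x)
      linarith [abs_sub_le (u y) (c : ℝ) (u x), (abs_sub_comm ((c : ℝ)) (u x)).le]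
    have h2pl : (0 : ℝ) ≤ 2 ^ pl := Real.rpow_nonneg zero_le_two pl
    calc |u y - u x| ^ p y ≤ (|u y - (c : ℝ)| + |u x - (c : ℝ)|) ^ p y :=
          Real.rpow_le_rpow (abs_nonneg _) habs h0
      _ ≤ 2 ^ pl * (|u y - (c : ℝ)| ^ p y + |u x - (c : ℝ)| ^ p y) :=
          vlp_rpow_add_le (abs_nonneg _) (abs_nonneg _) h0 hy2
      _ ≤ 2 ^ pl * (|u y - (c : ℝ)| ^ p y + δ) := by
          have hle : |u x - (c : ℝ)| ^ p y ≤ δ :=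
            vlp_rpow_le_of_le (abs_nonneg _) hc.le hδ1 hy1
          exact mul_le_mul_of_nonneg_left (by linarith) h2pl
  have hRHS_int : IntegrableOn
      (fun y => 2 ^ pl * (|u y - (c : ℝ)| ^ p y + δ)) S volume :=
    (hg_int.add (hconst_int δ)).const_mul _
  have hG_int : IntegrableOn (fun y => |u y - u x| ^ p y) S volume :=
    Integrable.mono' hRHS_int hGmeas hGbound
  have step0 : (∫ y in ball x ε, |u y - u x| ^ p y) ≤ ∫ y in S, |u y - u x| ^ p y :=
    setIntegral_mono_set hG_int
      (Filter.Eventually.of_forall fun y => Real.rpow_nonneg (abs_nonneg _) _)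
      (ball_subset_closedBall.eventuallyLE)
  have step1 : (∫ y in S, |u y - u x| ^ p y) ≤
      2 ^ pl * ((∫ y in S, |u y - (c : ℝ)| ^ p y) + δ * (volume S).toReal) := by
    have hmono := integral_mono_ae hG_int hRHS_int (by
      filter_upwards [hGbound] with y hy
      exact le_trans (le_abs_self _) (by rwa [Real.norm_eq_abs] at hy))
    have heq : ∫ y in S, 2 ^ pl * (|u y - (c : ℝ)| ^ p y + δ) =
        2 ^ pl * ((∫ y in S, |u y - (c : ℝ)| ^ p y) + δ * (volume S).toReal) := by
      rw [integral_const_mul, integral_add hg_int (hconst_int δ), setIntegral_const,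
        smul_eq_mul, mul_comm (volume.real S) δ, Measure.real]
    linarith [hmono, heq.le, heq.ge]
  have step2 : (∫ y in S, |u y - (c : ℝ)| ^ p y) ≤
      (∫ y in S, ‖|u y - (c : ℝ)| ^ p y - gx‖) + gx * (volume S).toReal := by
    have hmono := integral_mono_ae hg_int (hdiff_int.add (hconst_int gx))
      (Filter.Eventually.of_forall fun y => by
        have h := le_abs_self (|u y - (c : ℝ)| ^ p y - gx)
        show |u y - (c : ℝ)| ^ p y ≤ ‖|u y - (c : ℝ)| ^ p y - gx‖ + gx
        rw [Real.norm_eq_abs]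
        linarith)
    simp only [Pi.add_apply] at hmono
    have heq : ∫ y in S, (‖|u y - (c : ℝ)| ^ p y - gx‖ + gx) =
        (∫ y in S, ‖|u y - (c : ℝ)| ^ p y - gx‖) + gx * (volume S).toReal := by
      rw [integral_add hdiff_int (hconst_int gx), setIntegral_const, smul_eq_mul,
        mul_comm (volume.real S) gx, Measure.real]
    linarith [hmono, heq.le, heq.ge]
  have step3 : (∫ y in S, ‖|u y - (c : ℝ)| ^ p y - gx‖) = (volume S).toReal * T := by
    rw [hTdef, setAverage_eq, smul_eq_mul, ← mul_assoc, Measure.real,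
      mul_inv_cancel₀ hvolS_pos.ne', one_mul]
  have hIbound : (∫ y in ball x ε, |u y - u x| ^ p y) ≤
      2 ^ pl * (volume S).toReal * (T + gx + δ) := by
    calc (∫ y in ball x ε, |u y - u x| ^ p y)
        ≤ 2 ^ pl * ((∫ y in S, |u y - (c : ℝ)| ^ p y) + δ * (volume S).toReal) :=
          le_trans step0 step1
      _ ≤ 2 ^ pl * ((volume S).toReal * T + gx * (volume S).toReal
            + δ * (volume S).toReal) := by
          have h2pl : (0 : ℝ) ≤ 2 ^ pl := Real.rpow_nonneg zero_le_two pl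
          have := step2
          rw [step3] at this
          exact mul_le_mul_of_nonneg_left (by linarith) h2pl
      _ = 2 ^ pl * (volume S).toReal * (T + gx + δ) := by ring
  have hεpow : ε ^ (-(d : ℝ)) * ε ^ d = 1 := by
    rw [← Real.rpow_natCast ε d, ← Real.rpow_add hε]
    simp
  have hεpow_nonneg : (0 : ℝ) ≤ ε ^ (-(d : ℝ)) := Real.rpow_nonneg hε.le _
  have hquant_nonneg : 0 ≤ ε ^ (-(d : ℝ)) * ∫ y in ball x ε, |u y - u x| ^ p y :=
    mul_nonneg hεpow_nonneg
      (integral_nonneg fun y => Real.rpow_nonneg (abs_nonneg _) _)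
  rw [Real.dist_eq, sub_zero, abs_of_nonneg hquant_nonneg]
  have hTnonneg : 0 ≤ T := by
    rw [hTdef, setAverage_eq, smul_eq_mul]
    exact mul_nonneg (inv_nonneg.2 ENNReal.toReal_nonneg)
      (integral_nonneg fun y => norm_nonneg _)
  calc ε ^ (-(d : ℝ)) * ∫ y in ball x ε, |u y - u x| ^ p y
      ≤ ε ^ (-(d : ℝ)) * (2 ^ pl * (volume S).toReal * (T + gx + δ)) :=
        mul_le_mul_of_nonneg_left hIbound hεpow_nonneg
    _ = B * (T + gx + δ) := by
        rw [hvolS, hBdef]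
        have : ε ^ (-(d : ℝ)) * (2 ^ pl * (ε ^ d * κ) * (T + gx + δ)) =
            (ε ^ (-(d : ℝ)) * ε ^ d) * (2 ^ pl * κ * (T + gx + δ)) := by ring
        rw [this, hεpow, one_mul]
    _ < B * (δ + δ + δ) := by
        apply mul_lt_mul_of_pos_left _ hB
        linarith
    _ = 3 * B * δ := by ring
    _ < η := hδη

end
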